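/- For distinct real numbers λ₁,…,λ_{n+1}, ∑_{σ∈S_{n+1}} ∑_{k=1}^{n} (λ_{σ(1)}² + ⋯ + λ_{σ(k)}²)/(λ_{σ(k)} − λ_{σ(k+1)}) = n·(λ₁ + ⋯ + λ_{n+1})·n!. -/

import Mathlib

open Finset

lemma sum_perm_apply_aux {n : ℕ} (l : Fin (n+1) → ℝ) (x : Fin (n+1)) :
    ∑ σ : Equiv.Perm (Fin (n+1)), l (σ x) = (n.factorial : ℝ) * ∑ j, l j := by
  have hconst : ∀ y : Fin (n+1),
      ∑ σ : Equiv.Perm (Fin (n+1)), l (σ y) = ∑ σ : Equiv.Perm (Fin (n+1)), l (σ x) := by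
    intro y
    rw [← Equiv.sum_comp (Equiv.mulRight (Equiv.swap x y))
      (fun σ : Equiv.Perm (Fin (n+1)) => l (σ x))]
    simp [Equiv.Perm.mul_apply]
  have h1 : ∑ y : Fin (n+1), ∑ σ : Equiv.Perm (Fin (n+1)), l (σ y)
      = ((n:ℝ)+1) * ∑ σ : Equiv.Perm (Fin (n+1)), l (σ x) := by
    rw [Finset.sum_congr rfl (fun y _ => hconst y), Finset.sum_const, Finset.card_univ,
      Fintype.card_fin, nsmul_eq_mul]
    push_cast
    ring
  have h2 : ∑ y : Fin (n+1), ∑ σ : Equiv.Perm (Fin (n+1)), l (σ y)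
      = ((n+1).factorial : ℝ) * ∑ j, l j := by
    rw [Finset.sum_comm]
    have h3 : ∀ σ : Equiv.Perm (Fin (n+1)), ∑ y, l (σ y) = ∑ j, l j :=
      fun σ => Equiv.sum_comp σ l
    rw [Finset.sum_congr rfl (fun σ _ => h3 σ), Finset.sum_const, Finset.card_univ,
      Fintype.card_perm, Fintype.card_fin, nsmul_eq_mul]
  have hpos : ((n:ℝ)+1) ≠ 0 := by positivity
  exact mul_left_cancel₀ hpos ((h1.symm.trans h2).trans
    (by rw [Nat.factorial_succ]; push_cast; ring))

theorem stmt2 (n : ℕ) (l : Fin (n+1) → ℝ) (hl : Function.Injective l) :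
    ∑ σ : Equiv.Perm (Fin (n+1)), ∑ k : Fin n,
      (∑ i ∈ Finset.Iic k.castSucc, (l (σ i))^2) / (l (σ k.castSucc) - l (σ k.succ))
    = (n : ℝ) * (∑ j, l j) * n.factorial := by
  rw [Finset.sum_comm]
  have key : ∀ k : Fin n,
      ∑ σ : Equiv.Perm (Fin (n+1)),
        (∑ i ∈ Finset.Iic k.castSucc, (l (σ i))^2) / (l (σ k.castSucc) - l (σ k.succ))
      = (n.factorial : ℝ) * ∑ j, l j := by
    intro k
    set τ : Equiv.Perm (Fin (n+1)) := Equiv.swap k.castSucc k.succ with hτ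
    set f : Equiv.Perm (Fin (n+1)) → ℝ := fun σ =>
      (∑ i ∈ Finset.Iic k.castSucc, (l (σ i))^2) / (l (σ k.castSucc) - l (σ k.succ)) with hf
    have hne : k.castSucc ≠ k.succ := (Fin.castSucc_lt_succ : k.castSucc < k.succ).ne
    have hreidx : ∑ σ : Equiv.Perm (Fin (n+1)), f (σ * τ) = ∑ σ : Equiv.Perm (Fin (n+1)), f σ :=
      Equiv.sum_comp (Equiv.mulRight τ) f
    have hpair : ∀ σ : Equiv.Perm (Fin (n+1)),
        f σ + f (σ * τ) = l (σ k.castSucc) + l (σ k.succ) := by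
      intro σ
      have hd : l (σ k.castSucc) - l (σ k.succ) ≠ 0 := by
        intro h
        exact hne (σ.injective (hl (by linarith [sub_eq_zero.mp h])))
      have hnum : ∀ ρ : Equiv.Perm (Fin (n+1)),
          ∑ i ∈ Finset.Iic k.castSucc, (l (ρ i))^2
          = (∑ i ∈ Finset.Iio k.castSucc, (l (ρ i))^2) + (l (ρ k.castSucc))^2 := by
        intro ρ
        rw [← Finset.Iio_insert, Finset.sum_insert (by simp only [Finset.mem_Iio]; exact lt_irrefl _)]
        ring
      have hnum2 : ∑ i ∈ Finset.Iic k.castSucc, (l ((σ * τ) i))^2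
          = (∑ i ∈ Finset.Iio k.castSucc, (l (σ i))^2) + (l (σ k.succ))^2 := by
        rw [hnum (σ * τ)]
        congr 1
        · apply Finset.sum_congr rfl
          intro i hi
          simp only [Finset.mem_Iio] at hi
          have h1 : τ i = i := Equiv.swap_apply_of_ne_of_ne hi.ne
            (hi.trans (Fin.castSucc_lt_succ : k.castSucc < k.succ)).ne
          simp [Equiv.Perm.mul_apply, h1]
        · simp [Equiv.Perm.mul_apply, hτ]
      have hA : (σ * τ) k.castSucc = σ k.succ := by simp [Equiv.Perm.mul_apply, hτ]
      have hB : (σ * τ) k.succ = σ k.castSucc := by simp [Equiv.Perm.mul_apply, hτ]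
      simp only [hf, hnum σ, hnum2, hA, hB]
      set a := l (σ k.castSucc)
      set b := l (σ k.succ)
      set A := ∑ i ∈ Finset.Iio k.castSucc, (l (σ i))^2
      have hd' : b - a ≠ 0 := fun h => hd (by linarith [sub_eq_zero.mp h])
      field_simp
      ring
    have h2 : (2:ℝ) * ∑ σ : Equiv.Perm (Fin (n+1)), f σ
        = ∑ σ : Equiv.Perm (Fin (n+1)), (l (σ k.castSucc) + l (σ k.succ)) := by
      rw [two_mul]
      nth_rewrite 2 [← hreidx]
      rw [← Finset.sum_add_distrib]
      exact Finset.sum_congr rfl (fun σ _ => hpair σ)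
    rw [Finset.sum_add_distrib, sum_perm_apply_aux l, sum_perm_apply_aux l] at h2
    linarith [h2]
  rw [Finset.sum_congr rfl (fun k _ => key k), Finset.sum_const, Finset.card_univ,
    Fintype.card_fin, nsmul_eq_mul]
  ring
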